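/- Under the setup where P(R=1|Y,Ŷ,X) = π₀(X), π = P(R=1): for ANY measurable positive function w*(x) (not necessarily equal to the true density ratio), if the conditional-mean models are correctly specified, i.e. m̃*(x,ŷ) = E[s(Y,X)|X=x,Ŷ=ŷ] and m*(x) = E[s(Y,X)|X=x], then φ = (R/π)·w*(X)·(s(Y,X) − m̃*(X,Ŷ)) + (w*(X)/(π + (1−π)w*(X)))·(m̃*(X,Ŷ) − m*(X)) + ((1−R)/(1−π))·m*(X) satisfies E[φ] = E_q[s(Y,X)]. -/

import Mathlib

open MeasureTheory

section Helpers

variable {Ω : Type*} {m mΩ : MeasurableSpace Ω} {μ : Measure Ω} {d : ℕ}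

lemma myIntegrable_proj {mΩ' : MeasurableSpace Ω} {μ : Measure Ω}
    {f : Ω → Fin d → ℝ} (hf : Integrable f μ) (i : Fin d) :
    Integrable (fun ω => f ω i) μ :=
  (ContinuousLinearMap.proj (R := ℝ) (φ := fun _ : Fin d => ℝ) i).integrable_comp hf

lemma myIntegral_proj {mΩ' : MeasurableSpace Ω} {μ : Measure Ω}
    {f : Ω → Fin d → ℝ} (hf : Integrable f μ) (i : Fin d) :
    (∫ ω, f ω ∂μ) i = ∫ ω, f ω i ∂μ :=
  ((ContinuousLinearMap.proj (R := ℝ) (φ := fun _ : Fin d => ℝ) i).integral_comp_comm hf).symm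

lemma myCondexp_proj (hm : m ≤ mΩ) {μ : Measure (Ω)} [IsFiniteMeasure μ]
    {f : Ω → Fin d → ℝ} (hf : Integrable (α := Ω) f μ) (i : Fin d) :
    (fun ω => (μ[f|m]) ω i) =ᵐ[μ] μ[fun ω => f ω i|m] := by
  refine ae_eq_condExp_of_forall_setIntegral_eq hm (myIntegrable_proj hf i)
    (fun t ht hμt => (myIntegrable_proj (integrable_condExp (m := m)) i).integrableOn)
    (fun t ht hμt => ?_) ?_
  · rw [← myIntegral_proj integrable_condExp.integrableOn i,
      ← myIntegral_proj hf.integrableOn i, setIntegral_condExp hm hf ht]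
  · exact ((continuous_apply i).comp_stronglyMeasurable
      (stronglyMeasurable_condExp (m := m))).aestronglyMeasurable

lemma myAESM_mul {f g : Ω → ℝ} (hf : StronglyMeasurable[m] f)
    (hg : AEStronglyMeasurable[m] g μ) : AEStronglyMeasurable[m] (fun ω => f ω * g ω) μ :=
  ⟨fun ω => f ω * hg.mk g ω, hf.mul hg.stronglyMeasurable_mk,
    hg.ae_eq_mk.mono fun ω hω => by simp [hω]⟩

lemma myIntegral_mul_condexp (hm : m ≤ mΩ) {μ : Measure Ω} [IsFiniteMeasure μ] {f g : Ω → ℝ}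
    (hf : AEStronglyMeasurable[m] f μ) (hfg : Integrable (fun ω => f ω * g ω) μ)
    (hg : Integrable g μ) :
    ∫ ω, f ω * g ω ∂μ = ∫ ω, f ω * (μ[g|m]) ω ∂μ := by
  have h := condExp_mul_of_aestronglyMeasurable_left (μ := μ) hf hfg hg
  calc ∫ ω, f ω * g ω ∂μ = ∫ ω, (μ[f * g|m]) ω ∂μ := (integral_condExp hm).symm
    _ = ∫ ω, f ω * (μ[g|m]) ω ∂μ := integral_congr_ae h

end Helpers

theorem stmt_10 {Ω : Type*} [MeasurableSpace Ω] (μ : Measure Ω) [IsProbabilityMeasure μ]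
    {d : ℕ} (R Y X Yh : Ω → ℝ)
    (hR : Measurable R) (hY : Measurable Y) (hX : Measurable X) (hYh : Measurable Yh)
    (hRbin : ∀ ω, R ω = 0 ∨ R ω = 1)
    (p0 : ℝ → ℝ) (hp0 : Measurable p0) (hp0mem : ∀ x, p0 x ∈ Set.Ioo (0:ℝ) 1)
    (pl : ℝ) (hpl : pl = (μ {ω | R ω = 1}).toReal) (hplmem : pl ∈ Set.Ioo (0:ℝ) 1)
    (hMAR : μ[R | MeasurableSpace.comap (fun ω => (Y ω, Yh ω, X ω)) inferInstance]
      =ᵐ[μ] fun ω => p0 (X ω))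
    (wst : ℝ → ℝ) (hwst : Measurable wst) (hwstpos : ∀ x, 0 < wst x)
    (s0 : ℝ → ℝ → Fin d → ℝ) (hs0 : Measurable (Function.uncurry s0))
    (s mt m0 : Ω → Fin d → ℝ) (hs : s = fun ω => s0 (Y ω) (X ω))
    (hsInt : Integrable s μ)
    (hmt : mt =ᵐ[μ] μ[s | MeasurableSpace.comap (fun ω => (X ω, Yh ω)) inferInstance])
    (hm0 : m0 =ᵐ[μ] μ[s | MeasurableSpace.comap X inferInstance])
    (hmtInt : Integrable mt μ) (hm0Int : Integrable m0 μ)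
    (hwsts : Integrable (fun ω => wst (X ω) • (s ω - mt ω)) μ)
    (hwsts2 : Integrable (fun ω => p0 (X ω) • (wst (X ω) • (s ω - mt ω))) μ)
    (φ : Ω → Fin d → ℝ)
    (hφ : φ = fun ω => (R ω / pl) • (wst (X ω) • (s ω - mt ω))
        + (wst (X ω) / (pl + (1 - pl) * wst (X ω))) • (mt ω - m0 ω)
        + ((1 - R ω) / (1 - pl)) • m0 ω)
    (hφInt : Integrable φ μ) :
    ∫ ω, φ ω ∂μ = (1 - pl)⁻¹ • ∫ ω, (1 - R ω) • s ω ∂μ := by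
  classical
  have hm1 : MeasurableSpace.comap (fun ω => (Y ω, Yh ω, X ω)) inferInstance
      ≤ ‹MeasurableSpace Ω› := (hY.prodMk (hYh.prodMk hX)).comap_le
  have hm2 : MeasurableSpace.comap (fun ω => (X ω, Yh ω)) inferInstance
      ≤ ‹MeasurableSpace Ω› := (hX.prodMk hYh).comap_le
  have hmX : MeasurableSpace.comap X inferInstance
      ≤ ‹MeasurableSpace Ω› := hX.comap_le
  set mX := MeasurableSpace.comap X inferInstance with hmXdef
  set m2 := MeasurableSpace.comap (fun ω => (X ω, Yh ω)) inferInstance with hm2def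
  set m1 := MeasurableSpace.comap (fun ω => (Y ω, Yh ω, X ω)) inferInstance with hm1def
  -- mX ≤ m2
  have hX2 : mX ≤ m2 := by
    have h1 : mX = MeasurableSpace.comap (fun ω => (X ω, Yh ω))
        (MeasurableSpace.comap Prod.fst inferInstance) := by
      rw [MeasurableSpace.comap_comp]; rfl
    rw [h1]
    exact MeasurableSpace.comap_mono measurable_fst.comap_le
  -- m2 ≤ m1
  have h21 : m2 ≤ m1 := by
    have h1 : m2 = MeasurableSpace.comap (fun ω => (Y ω, Yh ω, X ω))
        (MeasurableSpace.comap (fun p : ℝ × ℝ × ℝ => (p.2.2, p.2.1)) inferInstance) := by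
      rw [MeasurableSpace.comap_comp]; rfl
    rw [h1]
    exact MeasurableSpace.comap_mono
      ((measurable_snd.snd.prodMk measurable_snd.fst).comap_le)
  have hX1 : mX ≤ m1 := hX2.trans h21
  -- basic measurability wrt comap σ-algebras
  have hXmX : Measurable[mX] X := Measurable.of_comap_le le_rfl
  have htrip : Measurable[m1] (fun ω => (Y ω, Yh ω, X ω)) := Measurable.of_comap_le le_rfl
  have hpair : Measurable[m2] (fun ω => (X ω, Yh ω)) := Measurable.of_comap_le le_rfl
  -- R bounds and integrability
  have hRabs : ∀ ω, |R ω| ≤ 1 := by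
    intro ω; rcases hRbin ω with h | h <;> simp [h]
  have hRInt : Integrable R μ := by
    refine Integrable.mono' (integrable_const 1) hR.aestronglyMeasurable ?_
    exact Filter.Eventually.of_forall fun ω => by simpa using hRabs ω
  have hp0abs : ∀ x, |p0 x| ≤ 1 := fun x =>
    abs_le.mpr ⟨by linarith [(hp0mem x).1], le_of_lt (hp0mem x).2⟩
  have hpl1 : (0:ℝ) < 1 - pl := by linarith [hplmem.2]
  have hpl0 : pl ≠ 0 := ne_of_gt hplmem.1
  -- generic MAR integral identity
  have hMARint : ∀ u : Ω → ℝ, AEStronglyMeasurable[m1] u μ → Integrable u μ →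
      ∫ ω, u ω * R ω ∂μ = ∫ ω, u ω * p0 (X ω) ∂μ := by
    intro u hu huInt
    have huR : Integrable (fun ω => u ω * R ω) μ := by
      refine Integrable.mono' huInt.abs (huInt.aestronglyMeasurable.mul hR.aestronglyMeasurable) ?_
      refine Filter.Eventually.of_forall fun ω => ?_
      have := hRabs ω
      calc ‖u ω * R ω‖ = |u ω| * |R ω| := abs_mul _ _
        _ ≤ |u ω| * 1 := by gcongr
        _ = |u ω| := mul_one _
    rw [myIntegral_mul_condexp hm1 hu huR hRInt]
    exact integral_congr_ae (hMAR.mono fun ω hω => by simp only [hω])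
  -- fix a component
  funext i
  -- component functions
  have hsi : ∀ j : Fin d, Integrable (fun ω => s ω j) μ := myIntegrable_proj hsInt
  have hmti : ∀ j : Fin d, Integrable (fun ω => mt ω j) μ := myIntegrable_proj hmtInt
  have hm0i : ∀ j : Fin d, Integrable (fun ω => m0 ω j) μ := myIntegrable_proj hm0Int
  -- s component is m1-measurable
  have hsMeas1 : StronglyMeasurable[m1] (fun ω => s ω i) := by
    have : Measurable[m1] (fun ω => s ω i) := by
      rw [hs]
      have h1 : Measurable (fun p : ℝ × ℝ × ℝ => Function.uncurry s0 (p.1, p.2.2) i) :=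
        (measurable_pi_apply i).comp (hs0.comp (measurable_fst.prodMk measurable_snd.snd))
      exact h1.comp htrip
    exact this.stronglyMeasurable
  -- mt component is a.e. equal to conditional expectation of s component wrt m2
  have hmtae : (fun ω => mt ω i) =ᵐ[μ] μ[fun ω => s ω i|m2] := by
    have h1 : (fun ω => mt ω i) =ᵐ[μ] (fun ω => (μ[s|m2]) ω i) :=
      hmt.mono fun ω hω => congrFun hω i
    exact h1.trans (myCondexp_proj hm2 hsInt i)
  have hm0ae : (fun ω => m0 ω i) =ᵐ[μ] μ[fun ω => s ω i|mX] := by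
    have h1 : (fun ω => m0 ω i) =ᵐ[μ] (fun ω => (μ[s|mX]) ω i) :=
      hm0.mono fun ω hω => congrFun hω i
    exact h1.trans (myCondexp_proj hmX hsInt i)
  have hmtAESM : AEStronglyMeasurable[m2] (fun ω => mt ω i) μ :=
    (stronglyMeasurable_condExp (m := m2)).aestronglyMeasurable.congr hmtae.symm
  have hm0AESM : AEStronglyMeasurable[mX] (fun ω => m0 ω i) μ :=
    (stronglyMeasurable_condExp (m := mX)).aestronglyMeasurable.congr hm0ae.symm
  -- g := wst(X) * (s_i - mt_i)
  set g : Ω → ℝ := fun ω => wst (X ω) * (s ω i - mt ω i) with hgdef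
  have hgInt : Integrable g μ := by
    have := myIntegrable_proj hwsts i
    refine this.congr (Filter.Eventually.of_forall fun ω => ?_)
    simp [hgdef, Pi.smul_apply, smul_eq_mul]
  have hwstX2 : StronglyMeasurable[m2] (fun ω => wst (X ω)) := by
    have : Measurable[m2] (fun ω => wst (X ω)) :=
      (hwst.comp measurable_fst).comp hpair
    exact this.stronglyMeasurable
  have hgAESM : AEStronglyMeasurable[m1] g μ :=
    myAESM_mul (hwstX2.mono h21)
      (hsMeas1.aestronglyMeasurable.sub (hmtAESM.mono h21))
  -- Step A1: ∫ g * R = ∫ g * p0(X)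
  have hA1 : ∫ ω, g ω * R ω ∂μ = ∫ ω, g ω * p0 (X ω) ∂μ := hMARint g hgAESM hgInt
  -- Step A2: ∫ g * p0(X) = 0
  have hA2 : ∫ ω, g ω * p0 (X ω) ∂μ = 0 := by
    have hh : StronglyMeasurable[m2] (fun ω => p0 (X ω) * wst (X ω)) := by
      have : Measurable[m2] (fun ω => p0 (X ω) * wst (X ω)) :=
        (((hp0.comp measurable_fst).mul (hwst.comp measurable_fst)).comp hpair)
      exact this.stronglyMeasurable
    have hsub : Integrable (fun ω => s ω i - mt ω i) μ := (hsi i).sub (hmti i)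
    have hInt2 : Integrable (fun ω => (p0 (X ω) * wst (X ω)) * (s ω i - mt ω i)) μ := by
      have := myIntegrable_proj hwsts2 i
      refine this.congr (Filter.Eventually.of_forall fun ω => ?_)
      simp [Pi.smul_apply, smul_eq_mul]; ring
    have h1 : ∫ ω, g ω * p0 (X ω) ∂μ
        = ∫ ω, (p0 (X ω) * wst (X ω)) * (s ω i - mt ω i) ∂μ := by
      refine integral_congr_ae (Filter.Eventually.of_forall fun ω => ?_)
      simp only [hgdef]; ring
    rw [h1, myIntegral_mul_condexp hm2 hh.aestronglyMeasurable hInt2 hsub]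
    have hcz : μ[fun ω => s ω i - mt ω i|m2] =ᵐ[μ] 0 := by
      have h2 : μ[fun ω => s ω i - mt ω i|m2]
          =ᵐ[μ] μ[fun ω => s ω i|m2] - μ[fun ω => mt ω i|m2] :=
        condExp_sub (m := m2) (hsi i) (hmti i)
      have h3 : μ[fun ω => mt ω i|m2] =ᵐ[μ] (fun ω => mt ω i) :=
        condExp_of_aestronglyMeasurable' hm2 hmtAESM (hmti i)
      filter_upwards [h2, h3.trans hmtae] with ω hω2 hω3
      simp only [Pi.sub_apply] at hω2 ⊢
      rw [hω2, hω3, sub_self]; rfl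
    calc ∫ ω, (p0 (X ω) * wst (X ω)) * (μ[fun ω => s ω i - mt ω i|m2]) ω ∂μ
        = ∫ ω, (0:ℝ) ∂μ := integral_congr_ae (hcz.mono fun ω hω => by simp [hω])
      _ = 0 := integral_zero _ _
  -- Step B: middle term has integral 0
  set h2f : Ω → ℝ := fun ω => wst (X ω) / (pl + (1 - pl) * wst (X ω)) with hh2def
  have hh2bound : ∀ ω, |h2f ω| ≤ (1 - pl)⁻¹ := by
    intro ω
    have hw := hwstpos (X ω)
    have hden : 0 < pl + (1 - pl) * wst (X ω) := by nlinarith [hplmem.1]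
    have hpos : 0 ≤ h2f ω := div_nonneg hw.le hden.le
    rw [abs_of_nonneg hpos, hh2def]
    rw [div_le_iff₀ hden]
    rw [inv_mul_eq_div, le_div_iff₀ hpl1]
    nlinarith [hplmem.1]
  have hh2meas : StronglyMeasurable[mX] h2f := by
    have : Measurable[mX] h2f :=
      ((hwst.comp hXmX).div (measurable_const.add
        (measurable_const.mul (hwst.comp hXmX))))
    exact this.stronglyMeasurable
  have hdiffInt : Integrable (fun ω => mt ω i - m0 ω i) μ := (hmti i).sub (hm0i i)
  have hBint : Integrable (fun ω => h2f ω * (mt ω i - m0 ω i)) μ := by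
    refine Integrable.mono' (hdiffInt.abs.const_mul ((1 - pl)⁻¹))
      (((hh2meas.mono hmX).aestronglyMeasurable).mul hdiffInt.aestronglyMeasurable) ?_
    refine Filter.Eventually.of_forall fun ω => ?_
    calc ‖h2f ω * (mt ω i - m0 ω i)‖ = |h2f ω| * |mt ω i - m0 ω i| := abs_mul _ _
      _ ≤ (1 - pl)⁻¹ * |mt ω i - m0 ω i| := by
          gcongr; exact hh2bound ω
  have hB : ∫ ω, h2f ω * (mt ω i - m0 ω i) ∂μ = 0 := by
    rw [myIntegral_mul_condexp hmX hh2meas.aestronglyMeasurable hBint hdiffInt]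
    have hcz : μ[fun ω => mt ω i - m0 ω i|mX] =ᵐ[μ] 0 := by
      have h2 : μ[fun ω => mt ω i - m0 ω i|mX]
          =ᵐ[μ] μ[fun ω => mt ω i|mX] - μ[fun ω => m0 ω i|mX] :=
        condExp_sub (m := mX) (hmti i) (hm0i i)
      have h3 : μ[fun ω => mt ω i|mX] =ᵐ[μ] μ[fun ω => s ω i|mX] :=
        (condExp_congr_ae hmtae).trans (condExp_condExp_of_le hX2 hm2)
      have h4 : μ[fun ω => m0 ω i|mX] =ᵐ[μ] (fun ω => m0 ω i) :=
        condExp_of_aestronglyMeasurable' hmX hm0AESM (hm0i i)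
      filter_upwards [h2, h3.trans hm0ae.symm, h4] with ω hω2 hω3 hω4
      simp only [Pi.sub_apply] at hω2 ⊢
      rw [hω2, hω3, hω4, sub_self]; rfl
    calc ∫ ω, h2f ω * (μ[fun ω => mt ω i - m0 ω i|mX]) ω ∂μ
        = ∫ ω, (0:ℝ) ∂μ := integral_congr_ae (hcz.mono fun ω hω => by simp [hω])
      _ = 0 := integral_zero _ _
  -- Step C pieces
  have hm0AESM1 : AEStronglyMeasurable[m1] (fun ω => m0 ω i) μ := hm0AESM.mono hX1
  have hC1 : ∫ ω, m0 ω i * R ω ∂μ = ∫ ω, m0 ω i * p0 (X ω) ∂μ :=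
    hMARint _ hm0AESM1 (hm0i i)
  have hC2 : ∫ ω, s ω i * R ω ∂μ = ∫ ω, s ω i * p0 (X ω) ∂μ :=
    hMARint _ hsMeas1.aestronglyMeasurable (hsi i)
  have hp0X : StronglyMeasurable[mX] (fun ω => p0 (X ω)) :=
    ((hp0.comp hXmX)).stronglyMeasurable
  have hp0sInt : Integrable (fun ω => p0 (X ω) * s ω i) μ := by
    refine Integrable.mono' (hsi i).abs
      (((hp0X.mono hmX).aestronglyMeasurable).mul (hsi i).aestronglyMeasurable) ?_
    refine Filter.Eventually.of_forall fun ω => ?_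
    calc ‖p0 (X ω) * s ω i‖ = |p0 (X ω)| * |s ω i| := abs_mul _ _
      _ ≤ 1 * |s ω i| := by gcongr; exact hp0abs (X ω)
      _ = |s ω i| := one_mul _
  have hC3 : ∫ ω, p0 (X ω) * s ω i ∂μ = ∫ ω, p0 (X ω) * m0 ω i ∂μ := by
    rw [myIntegral_mul_condexp hmX hp0X.aestronglyMeasurable hp0sInt (hsi i)]
    exact integral_congr_ae (hm0ae.mono fun ω hω => by simp only [hω])
  have hC4 : ∫ ω, m0 ω i ∂μ = ∫ ω, s ω i ∂μ := by
    rw [integral_congr_ae hm0ae]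
    exact integral_condExp hmX
  -- final assembly: integrability of the three terms
  have ht1Int : Integrable (fun ω => (R ω / pl) * g ω) μ := by
    refine Integrable.mono' (hgInt.abs.const_mul (|pl|⁻¹))
      (((hR.div_const pl).aestronglyMeasurable).mul hgInt.aestronglyMeasurable) ?_
    refine Filter.Eventually.of_forall fun ω => ?_
    calc ‖R ω / pl * g ω‖ = |R ω| / |pl| * |g ω| := by
          rw [Real.norm_eq_abs, abs_mul, abs_div]
      _ ≤ 1 / |pl| * |g ω| := by gcongr; exact hRabs ω
      _ = |pl|⁻¹ * |g ω| := by rw [one_div]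
  have ht3Int : Integrable (fun ω => ((1 - R ω) / (1 - pl)) * m0 ω i) μ := by
    refine Integrable.mono' ((hm0i i).abs.const_mul ((1-pl)⁻¹))
      ((((measurable_const.sub hR).div_const (1 - pl)).aestronglyMeasurable).mul
        (hm0i i).aestronglyMeasurable) ?_
    refine Filter.Eventually.of_forall fun ω => ?_
    have h1R : |1 - R ω| ≤ 1 := by rcases hRbin ω with h | h <;> simp [h]
    calc ‖(1 - R ω) / (1 - pl) * m0 ω i‖ = |1 - R ω| / |1 - pl| * |m0 ω i| := by
          rw [Real.norm_eq_abs, abs_mul, abs_div]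
      _ ≤ 1 / |1 - pl| * |m0 ω i| := by gcongr
      _ = (1 - pl)⁻¹ * |m0 ω i| := by rw [one_div, abs_of_pos hpl1]
  -- the component of φ
  have hφi : ∀ ω, φ ω i = (R ω / pl) * g ω + h2f ω * (mt ω i - m0 ω i)
      + ((1 - R ω) / (1 - pl)) * m0 ω i := by
    intro ω
    simp [hφ, hgdef, hh2def, Pi.add_apply, Pi.smul_apply, Pi.sub_apply, smul_eq_mul]
  have hRs : Integrable (fun ω => (1 - R ω) • s ω) μ := by
    refine Integrable.mono' (hsInt.norm.const_mul 2)
      (((measurable_const.sub hR).aestronglyMeasurable.smul hsInt.aestronglyMeasurable)) ?_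
    refine Filter.Eventually.of_forall fun ω => ?_
    rw [norm_smul]
    have h1R : ‖(1:ℝ) - R ω‖ ≤ 2 := by
      rcases hRbin ω with h | h <;> simp [h] <;> norm_num
    exact mul_le_mul_of_nonneg_right h1R (norm_nonneg _)
  -- compute
  rw [myIntegral_proj hφInt i, Pi.smul_apply, myIntegral_proj hRs i, smul_eq_mul]
  have hsplit : ∫ ω, φ ω i ∂μ = (∫ ω, (R ω / pl) * g ω ∂μ)
      + (∫ ω, h2f ω * (mt ω i - m0 ω i) ∂μ)
      + ∫ ω, ((1 - R ω) / (1 - pl)) * m0 ω i ∂μ := by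
    have e0 : (fun ω => φ ω i) =ᵐ[μ] (fun ω => (R ω / pl) * g ω
        + h2f ω * (mt ω i - m0 ω i) + ((1 - R ω) / (1 - pl)) * m0 ω i) :=
      Filter.Eventually.of_forall hφi
    have hAdd : Integrable (fun ω => (R ω / pl) * g ω
        + h2f ω * (mt ω i - m0 ω i)) μ := ht1Int.add hBint
    rw [integral_congr_ae e0, integral_add hAdd ht3Int, integral_add ht1Int hBint]
  rw [hsplit, hB]
  have hT1 : ∫ ω, (R ω / pl) * g ω ∂μ = 0 := by
    have : ∀ ω, (R ω / pl) * g ω = pl⁻¹ * (g ω * R ω) := by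
      intro ω; ring
    rw [integral_congr_ae (Filter.Eventually.of_forall this), integral_const_mul,
      hA1, hA2, mul_zero]
  have hT3 : ∫ ω, ((1 - R ω) / (1 - pl)) * m0 ω i ∂μ
      = (1 - pl)⁻¹ * ∫ ω, (1 - R ω) * s ω i ∂μ := by
    have h1 : ∀ ω, ((1 - R ω) / (1 - pl)) * m0 ω i
        = (1 - pl)⁻¹ * ((1 - R ω) * m0 ω i) := by
      intro ω; ring
    rw [integral_congr_ae (Filter.Eventually.of_forall h1), integral_const_mul]
    congr 1
    have h2 : ∫ ω, (1 - R ω) * m0 ω i ∂μ = (∫ ω, m0 ω i ∂μ) - ∫ ω, m0 ω i * R ω ∂μ := by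
      rw [← integral_sub (hm0i i) ?hint]
      · exact integral_congr_ae (Filter.Eventually.of_forall fun ω => by ring)
      case hint =>
        refine Integrable.mono' (hm0i i).abs
          ((hm0i i).aestronglyMeasurable.mul hR.aestronglyMeasurable) ?_
        refine Filter.Eventually.of_forall fun ω => ?_
        calc ‖m0 ω i * R ω‖ = |m0 ω i| * |R ω| := abs_mul _ _
          _ ≤ |m0 ω i| * 1 := by gcongr; exact hRabs ω
          _ = |m0 ω i| := mul_one _
    have h3 : ∫ ω, (1 - R ω) * s ω i ∂μ = (∫ ω, s ω i ∂μ) - ∫ ω, s ω i * R ω ∂μ := by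
      rw [← integral_sub (hsi i) ?hint]
      · exact integral_congr_ae (Filter.Eventually.of_forall fun ω => by ring)
      case hint =>
        refine Integrable.mono' (hsi i).abs
          ((hsi i).aestronglyMeasurable.mul hR.aestronglyMeasurable) ?_
        refine Filter.Eventually.of_forall fun ω => ?_
        calc ‖s ω i * R ω‖ = |s ω i| * |R ω| := abs_mul _ _
          _ ≤ |s ω i| * 1 := by gcongr; exact hRabs ω
          _ = |s ω i| := mul_one _
    rw [h2, h3, hC4, hC1, hC2]
    have h5 : ∫ ω, m0 ω i * p0 (X ω) ∂μ = ∫ ω, s ω i * p0 (X ω) ∂μ := by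
      have e1 : ∫ ω, m0 ω i * p0 (X ω) ∂μ = ∫ ω, p0 (X ω) * m0 ω i ∂μ :=
        integral_congr_ae (Filter.Eventually.of_forall fun ω => by ring)
      have e2 : ∫ ω, s ω i * p0 (X ω) ∂μ = ∫ ω, p0 (X ω) * s ω i ∂μ :=
        integral_congr_ae (Filter.Eventually.of_forall fun ω => by ring)
      rw [e1, e2, hC3]
    rw [h5]
  rw [hT1, hT3]
  have : ∀ ω, (1 - R ω) * s ω i = ((1 - R ω) • s ω) i := by
    intro ω; simp [Pi.smul_apply, smul_eq_mul]
  rw [integral_congr_ae (Filter.Eventually.of_forall this)]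
  ring
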